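/- Let H be a Hopf algebra and A a partial H-module algebra (i.e., 1_H·a = a and h·(a(k·b)) = Σ (h₁·a)(h₂k·b) for all h,k ∈ H, a,b ∈ A). Then for all h ∈ H and x,y ∈ A, Σ h₁·(S(h₂)·(xy)) = Σ (h₁·(S(h₂)·x))·y; that is, the map a ↦ Σ h₁·(S(h₂)·a) is a right A-module endomorphism of A. -/

import Mathlib

open TensorProduct

section PartialHopfPrelude

variable (k : Type) [Field k] (H : Type) [Ring H] [HopfAlgebra k H]

/-- Sweedler-style sum `Σ f h₁ h₂` over the comultiplication of `h`. -/
noncomputable def sweedler {M : Type} [AddCommGroup M] [Module k M]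
    (f : H →ₗ[k] H →ₗ[k] M) (h : H) : M :=
  TensorProduct.lift f (Coalgebra.comul h)

variable {A : Type} [AddCommGroup A] [Module k A]

/-- `Σ (h₁ · a) * (h₂ g · b)`, with an explicit multiplication `mA` on `A`. -/
noncomputable def paRhs (mA : A →ₗ[k] A →ₗ[k] A) (act : H →ₗ[k] A →ₗ[k] A)
    (h g : H) (a b : A) : A :=
  sweedler k H ((mA.comp (act.flip a)).compl₂ ((act.flip b).comp (LinearMap.mulRight k g))) h

/-- `Σ (h₁ g · b) * (h₂ · a)`, with an explicit multiplication `mA` on `A`. -/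
noncomputable def paSymmRhs (mA : A →ₗ[k] A →ₗ[k] A) (act : H →ₗ[k] A →ₗ[k] A)
    (h g : H) (a b : A) : A :=
  sweedler k H ((mA.comp ((act.flip b).comp (LinearMap.mulRight k g))).compl₂ (act.flip a)) h

/-- A (left) partial action of the Hopf algebra `H` on `A`, where the (possibly nonunital,
possibly nonassociative) multiplication of `A` is given explicitly as a bilinear map `mA`:
`1_H · a = a` and `h · (a (g · b)) = Σ (h₁ · a)(h₂ g · b)`. -/
structure IsPartialActionOn (mA : A →ₗ[k] A →ₗ[k] A) (act : H →ₗ[k] A →ₗ[k] A) : Prop where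
  one_act : ∀ a : A, act 1 a = a
  act_assoc : ∀ (h g : H) (a b : A), act h (mA a (act g b)) = paRhs k H mA act h g a b

/-- A symmetrical partial action: additionally `h · ((g · b) a) = Σ (h₁ g · b)(h₂ · a)`. -/
structure IsSymmPartialActionOn (mA : A →ₗ[k] A →ₗ[k] A) (act : H →ₗ[k] A →ₗ[k] A)
    extends IsPartialActionOn k H mA act : Prop where
  act_symm : ∀ (h g : H) (a b : A), act h (mA (act g b) a) = paSymmRhs k H mA act h g a b

variable {B : Type} [NonUnitalRing B] [Module k B] [SMulCommClass k B B] [IsScalarTower k B B]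

/-- A partial action of `H` on the nonunital algebra `B` (with its own multiplication). -/
def IsPartialAction (act : H →ₗ[k] B →ₗ[k] B) : Prop :=
  IsPartialActionOn k H (LinearMap.mul k B) act

/-- A symmetrical partial action of `H` on the nonunital algebra `B`. -/
def IsSymmPartialAction (act : H →ₗ[k] B →ₗ[k] B) : Prop :=
  IsSymmPartialActionOn k H (LinearMap.mul k B) act

end PartialHopfPrelude

section Conv
variable {k : Type} [Field k] {H : Type} [Ring H] [HopfAlgebra k H]
variable {C : Type} [Semiring C] [Algebra k C]

/-- Convolution product on linear maps from a coalgebra to an algebra. -/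
noncomputable def conv (f g : H →ₗ[k] C) : H →ₗ[k] C :=
  LinearMap.mul' k C ∘ₗ TensorProduct.map f g ∘ₗ Coalgebra.comul

lemma conv_repr (f g : H →ₗ[k] C) (h : H) (r : Coalgebra.Repr k h (H × H)) :
    conv f g h = ∑ i ∈ r.index, f (r.left i) * g (r.right i) := by
  simp [conv, ← r.eq, map_sum]

lemma sum_smul_counit_eq {a : H} (r : Coalgebra.Repr k a (H × H)) :
    ∑ i ∈ r.index, Coalgebra.counit (R := k) (r.right i) • r.left i = a := by
  have h := congrArg (TensorProduct.rid k H) (Coalgebra.sum_tmul_counit_eq r)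
  rw [map_sum] at h
  simp only [TensorProduct.rid_tmul, one_smul] at h
  exact h

lemma sum_counit_smul_eq {a : H} (r : Coalgebra.Repr k a (H × H)) :
    ∑ i ∈ r.index, Coalgebra.counit (R := k) (r.left i) • r.right i = a := by
  have h := congrArg (TensorProduct.lid k H) (Coalgebra.sum_counit_tmul_eq r)
  rw [map_sum] at h
  simp only [TensorProduct.lid_tmul, one_smul] at h
  exact h

/-- The convolution unit. -/
noncomputable def convUnit : H →ₗ[k] C :=
  Algebra.linearMap k C ∘ₗ Coalgebra.counit

lemma convUnit_apply (h : H) :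
    (convUnit (k := k) (H := H) (C := C)) h = Coalgebra.counit (R := k) h • (1 : C) := by
  simp [convUnit, Algebra.smul_def]

lemma conv_unit_right (f : H →ₗ[k] C) : conv f convUnit = f := by
  ext h
  set r := Coalgebra.Repr.arbitrary k h
  rw [conv_repr f _ h r]
  calc ∑ i ∈ r.index, f (r.left i) * convUnit (r.right i)
      = ∑ i ∈ r.index, Coalgebra.counit (R := k) (r.right i) • f (r.left i) := by
        refine Finset.sum_congr rfl fun i _ => ?_
        rw [convUnit_apply, mul_smul_comm, mul_one]
    _ = f h := by
        simp_rw [← map_smul, ← map_sum, sum_smul_counit_eq r]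

lemma conv_unit_left (f : H →ₗ[k] C) : conv convUnit f = f := by
  ext h
  set r := Coalgebra.Repr.arbitrary k h
  rw [conv_repr _ f h r]
  calc ∑ i ∈ r.index, convUnit (r.left i) * f (r.right i)
      = ∑ i ∈ r.index, Coalgebra.counit (R := k) (r.left i) • f (r.right i) := by
        refine Finset.sum_congr rfl fun i _ => ?_
        rw [convUnit_apply, smul_mul_assoc, one_mul]
    _ = f h := by
        simp_rw [← map_smul, ← map_sum, sum_counit_smul_eq r]

lemma conv_assoc (f g p : H →ₗ[k] C) : conv (conv f g) p = conv f (conv g p) := by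
  ext h
  set r := Coalgebra.Repr.arbitrary k h with hr
  set rL := fun i => Coalgebra.Repr.arbitrary k (r.left i) with hrL
  set rR := fun i => Coalgebra.Repr.arbitrary k (r.right i) with hrR
  have key := Coalgebra.sum_map_tmul_tmul_eq f g p h (repr := r) (a₁ := rL) (a₂ := rR)
  apply_fun (LinearMap.mul' k C ∘ₗ LinearMap.lTensor C (LinearMap.mul' k C)) at key
  simp only [map_sum, LinearMap.comp_apply, LinearMap.lTensor_tmul, LinearMap.mul'_apply] at key
  calc (conv (conv f g) p) h
      = ∑ i ∈ r.index, (conv f g) (r.left i) * p (r.right i) := conv_repr _ _ _ r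
    _ = ∑ i ∈ r.index, ∑ j ∈ (rL i).index,
          (f ((rL i).left j) * g ((rL i).right j)) * p (r.right i) := by
        refine Finset.sum_congr rfl fun i _ => ?_
        rw [conv_repr f g _ (rL i), Finset.sum_mul]
    _ = ∑ i ∈ r.index, ∑ j ∈ (rL i).index,
          f ((rL i).left j) * (g ((rL i).right j) * p (r.right i)) := by
        simp [mul_assoc]
    _ = ∑ i ∈ r.index, ∑ j ∈ (rR i).index,
          f (r.left i) * (g ((rR i).left j) * p ((rR i).right j)) := key.symm
    _ = ∑ i ∈ r.index, f (r.left i) * (conv g p) (r.right i) := by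
        refine Finset.sum_congr rfl fun i _ => ?_
        rw [conv_repr g p _ (rR i), Finset.mul_sum]
    _ = (conv f (conv g p)) h := (conv_repr _ _ _ r).symm


local notation "S" => HopfAlgebra.antipode (R := k) (A := H)
local notation "Δ" => Coalgebra.comul (R := k) (A := H)

/-- Sweedler: `Σ Δ(h₁) * (1 ⊗ S h₂) = h ⊗ 1`. -/
lemma claimA (a : H) (ra : Coalgebra.Repr k a (H × H)) :
    ∑ j ∈ ra.index, Δ (ra.left j) * ((1 : H) ⊗ₜ[k] S (ra.right j)) = a ⊗ₜ[k] (1 : H) := by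
  set rL := fun j => Coalgebra.Repr.arbitrary k (ra.left j) with hrL
  set rR := fun j => Coalgebra.Repr.arbitrary k (ra.right j) with hrR
  have key := Coalgebra.sum_tmul_tmul_eq ra rL rR
  apply_fun (LinearMap.lTensor H (LinearMap.mul' k H ∘ₗ LinearMap.lTensor H S)) at key
  simp only [map_sum, LinearMap.lTensor_tmul, LinearMap.comp_apply,
    LinearMap.mul'_apply] at key
  calc ∑ j ∈ ra.index, Δ (ra.left j) * ((1 : H) ⊗ₜ[k] S (ra.right j))
      = ∑ j ∈ ra.index, ∑ m ∈ (rL j).index,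
          (rL j).left m ⊗ₜ[k] ((rL j).right m * S (ra.right j)) := by
        refine Finset.sum_congr rfl fun j _ => ?_
        rw [← (rL j).eq, Finset.sum_mul]
        refine Finset.sum_congr rfl fun m _ => ?_
        rw [Algebra.TensorProduct.tmul_mul_tmul, mul_one]
    _ = ∑ j ∈ ra.index, ∑ m ∈ (rR j).index,
          ra.left j ⊗ₜ[k] ((rR j).left m * S ((rR j).right m)) := key
    _ = ∑ j ∈ ra.index, Coalgebra.counit (R := k) (ra.right j) • (ra.left j ⊗ₜ[k] (1 : H)) := by
        refine Finset.sum_congr rfl fun j _ => ?_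
        rw [← TensorProduct.tmul_sum, HopfAlgebra.sum_mul_antipode_eq_algebraMap_counit (rR j),
          Algebra.algebraMap_eq_smul_one, TensorProduct.tmul_smul]
    _ = a ⊗ₜ[k] (1 : H) := by
        simp_rw [TensorProduct.smul_tmul']
        rw [← TensorProduct.sum_tmul, sum_smul_counit_eq ra]

/-- `Δ ∘ S` is a left convolution inverse of `Δ`. -/
lemma F_conv_comul :
    conv ((Δ) ∘ₗ (S)) (Δ) = (convUnit : H →ₗ[k] H ⊗[k] H) := by
  ext h
  set r := Coalgebra.Repr.arbitrary k h
  rw [conv_repr _ _ h r, convUnit_apply]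
  calc ∑ i ∈ r.index, ((Δ) ∘ₗ (S)) (r.left i) * Δ (r.right i)
      = Δ (∑ i ∈ r.index, S (r.left i) * r.right i) := by
        rw [map_sum]
        exact Finset.sum_congr rfl fun i _ => (Bialgebra.comul_mul _ _).symm
    _ = Coalgebra.counit (R := k) h • (1 : H ⊗[k] H) := by
        rw [HopfAlgebra.sum_antipode_mul_eq_algebraMap_counit r, Algebra.algebraMap_eq_smul_one, map_smul,
          Bialgebra.comul_one]

/-- `τ ∘ (S ⊗ S) ∘ Δ` is a right convolution inverse of `Δ`. -/
lemma comul_conv_G :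
    conv (Δ) ((TensorProduct.comm k H H).toLinearMap ∘ₗ TensorProduct.map (S) (S) ∘ₗ (Δ)) =
      (convUnit : H →ₗ[k] H ⊗[k] H) := by
  ext h
  set G := (TensorProduct.comm k H H).toLinearMap ∘ₗ TensorProduct.map (S) (S) ∘ₗ (Δ) with hG
  set r := Coalgebra.Repr.arbitrary k h with hr
  set rL := fun i => Coalgebra.Repr.arbitrary k (r.left i) with hrL
  set rR := fun i => Coalgebra.Repr.arbitrary k (r.right i) with hrR
  have key := Coalgebra.sum_tmul_tmul_eq r rL rR
  apply_fun ((LinearMap.mul' k (H ⊗[k] H)) ∘ₗ (LinearMap.lTensor (H ⊗[k] H) (LinearMap.mul' k (H ⊗[k] H)))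
      ∘ₗ TensorProduct.map (Δ) (TensorProduct.map
        (((TensorProduct.mk k H H) 1) ∘ₗ (S)) (((TensorProduct.mk k H H).flip 1) ∘ₗ (S)))) at key
  simp only [map_sum, LinearMap.comp_apply, TensorProduct.map_tmul, LinearMap.lTensor_tmul,
    LinearMap.mul'_apply, TensorProduct.mk_apply, LinearMap.flip_apply] at key
  rw [conv_repr _ _ h r, convUnit_apply]
  calc ∑ i ∈ r.index, Δ (r.left i) * G (r.right i)
      = ∑ i ∈ r.index, ∑ m ∈ (rR i).index,
          Δ (r.left i) * (((1 : H) ⊗ₜ[k] S ((rR i).left m)) * (S ((rR i).right m) ⊗ₜ[k] (1 : H))) := by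
        refine Finset.sum_congr rfl fun i _ => ?_
        rw [hG]
        simp only [LinearMap.comp_apply]
        rw [← (rR i).eq, map_sum, map_sum, Finset.mul_sum]
        refine Finset.sum_congr rfl fun m _ => ?_
        simp [Algebra.TensorProduct.tmul_mul_tmul]
    _ = ∑ i ∈ r.index, ∑ j ∈ (rL i).index,
          Δ ((rL i).left j) * (((1 : H) ⊗ₜ[k] S ((rL i).right j)) * (S (r.right i) ⊗ₜ[k] (1 : H))) := by
        exact key.symm
    _ = ∑ i ∈ r.index,
          (r.left i ⊗ₜ[k] (1 : H)) * (S (r.right i) ⊗ₜ[k] (1 : H)) := by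
        refine Finset.sum_congr rfl fun i _ => ?_
        simp_rw [← mul_assoc]
        rw [← Finset.sum_mul, claimA (r.left i) (rL i)]
    _ = Coalgebra.counit (R := k) h • (1 : H ⊗[k] H) := by
        simp_rw [Algebra.TensorProduct.tmul_mul_tmul, mul_one]
        rw [← TensorProduct.sum_tmul, HopfAlgebra.sum_mul_antipode_eq_algebraMap_counit r,
          Algebra.algebraMap_eq_smul_one, ← TensorProduct.smul_tmul',
          ← Algebra.TensorProduct.one_def]

/-- The antipode is an anti-coalgebra morphism. -/
lemma comul_antipode_eq :
    (Δ) ∘ₗ (S) = (TensorProduct.comm k H H).toLinearMap ∘ₗ TensorProduct.map (S) (S) ∘ₗ (Δ) := by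
  calc (Δ) ∘ₗ (S) = conv ((Δ) ∘ₗ (S)) convUnit := (conv_unit_right _).symm
    _ = conv ((Δ) ∘ₗ (S)) (conv (Δ)
          ((TensorProduct.comm k H H).toLinearMap ∘ₗ TensorProduct.map (S) (S) ∘ₗ (Δ))) := by
        rw [comul_conv_G]
    _ = conv (conv ((Δ) ∘ₗ (S)) (Δ))
          ((TensorProduct.comm k H H).toLinearMap ∘ₗ TensorProduct.map (S) (S) ∘ₗ (Δ)) := by
        rw [conv_assoc]
    _ = conv convUnit _ := by rw [F_conv_comul]
    _ = _ := conv_unit_left _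

lemma comul_antipode (h : H) :
    Δ (S h) = (TensorProduct.comm k H H) (TensorProduct.map (S) (S) (Δ h)) :=
  congr($(comul_antipode_eq) h)

end Conv


section Stmt1

variable {k : Type} [Field k] {H : Type} [Ring H] [HopfAlgebra k H]
variable {A : Type} [NonUnitalRing A] [Module k A] [SMulCommClass k A A] [IsScalarTower k A A]

/-- `Σ h₁ · (S(h₂) · x)`. -/
noncomputable def hSh (act : H →ₗ[k] A →ₗ[k] A) (h : H) (x : A) : A :=
  sweedler k H (act.compl₂ ((act.flip x).comp (HopfAlgebra.antipode (R := k)))) h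


local notation "𝒮" => HopfAlgebra.antipode (R := k) (A := H)

lemma sweedler_repr {M : Type} [AddCommGroup M] [Module k M]
    (f : H →ₗ[k] H →ₗ[k] M) (h : H) (r : Coalgebra.Repr k h (H × H)) :
    sweedler k H f h = ∑ i ∈ r.index, f (r.left i) (r.right i) := by
  simp [sweedler, ← r.eq, map_sum]

lemma paRhs_repr (act : H →ₗ[k] A →ₗ[k] A) (h g : H) (a b : A) (r : Coalgebra.Repr k h (H × H)) :
    paRhs k H (LinearMap.mul k A) act h g a b =
      ∑ i ∈ r.index, act (r.left i) a * act (r.right i * g) b := by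
  rw [paRhs, sweedler_repr _ _ r]
  simp [LinearMap.mul_apply']

lemma act_mul (act : H →ₗ[k] A →ₗ[k] A)
    (hpa : IsPartialActionOn k H (LinearMap.mul k A) act) (g : H) (x y : A) :
    act g (x * y) = TensorProduct.lift
      (((LinearMap.mul k A).comp (act.flip x)).compl₂ (act.flip y)) (Coalgebra.comul g) := by
  have h0 : x * y = (LinearMap.mul k A) x (act 1 y) := by rw [hpa.one_act]; rfl
  rw [h0, hpa.act_assoc g 1 x y, paRhs, sweedler]
  congr 1
  ext u v
  simp [mul_one]

lemma claimB (act : H →ₗ[k] A →ₗ[k] A)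
    (hpa : IsPartialActionOn k H (LinearMap.mul k A) act)
    (w : H) (rw : Coalgebra.Repr k w (H × H)) (a' y : A) :
    ∑ j ∈ rw.index, paRhs k H (LinearMap.mul k A) act (rw.left j) (𝒮 (rw.right j)) a' y =
      act w a' * y := by
  set rwL := fun j => Coalgebra.Repr.arbitrary k (rw.left j) with hrwL
  set rwR := fun j => Coalgebra.Repr.arbitrary k (rw.right j) with hrwR
  have key := Coalgebra.sum_tmul_tmul_eq rw rwL rwR
  apply_fun (TensorProduct.lift (LinearMap.mul k A) ∘ₗ TensorProduct.map (act.flip a')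
      ((act.flip y) ∘ₗ LinearMap.mul' k H ∘ₗ LinearMap.lTensor H (𝒮))) at key
  simp only [map_sum, LinearMap.comp_apply, TensorProduct.map_tmul, LinearMap.lTensor_tmul,
    LinearMap.mul'_apply, TensorProduct.lift.tmul, LinearMap.flip_apply,
    LinearMap.mul_apply'] at key
  calc ∑ j ∈ rw.index, paRhs k H (LinearMap.mul k A) act (rw.left j) (𝒮 (rw.right j)) a' y
      = ∑ j ∈ rw.index, ∑ m ∈ (rwL j).index,
          act ((rwL j).left m) a' * act ((rwL j).right m * 𝒮 (rw.right j)) y := by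
        exact Finset.sum_congr rfl fun j _ => paRhs_repr act _ _ _ _ (rwL j)
    _ = ∑ j ∈ rw.index, ∑ m ∈ (rwR j).index,
          act (rw.left j) a' * act ((rwR j).left m * 𝒮 ((rwR j).right m)) y := key
    _ = ∑ j ∈ rw.index, Coalgebra.counit (R := k) (rw.right j) • (act (rw.left j) a' * y) := by
        refine Finset.sum_congr rfl fun j _ => ?_
        rw [← Finset.mul_sum, ← LinearMap.sum_apply, ← map_sum,
          HopfAlgebra.sum_mul_antipode_eq_algebraMap_counit (rwR j), Algebra.algebraMap_eq_smul_one, map_smul,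
          LinearMap.smul_apply, hpa.one_act, mul_smul_comm]
    _ = act w a' * y := by
        simp_rw [← smul_mul_assoc]
        rw [← Finset.sum_mul]
        congr 1
        simp_rw [← LinearMap.map_smul₂]
        rw [← LinearMap.sum_apply, ← map_sum, sum_smul_counit_eq rw]

/-- If `A` is a partial `H`-module algebra, then for all `h ∈ H`, `x, y ∈ A`,
`Σ h₁ · (S(h₂) · (x y)) = (Σ h₁ · (S(h₂) · x)) y`; that is, `a ↦ Σ h₁ · (S(h₂) · a)` is a
right `A`-module endomorphism of `A`. -/
theorem hSh_right_module_map (act : H →ₗ[k] A →ₗ[k] A)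
    (hpa : IsPartialAction k H act) (h : H) (x y : A) :
    hSh act h (x * y) = hSh act h x * y := by
  have hpa' : IsPartialActionOn k H (LinearMap.mul k A) act := hpa
  set r := Coalgebra.Repr.arbitrary k h with hr
  set rL := fun i => Coalgebra.Repr.arbitrary k (r.left i) with hrL
  set rR := fun i => Coalgebra.Repr.arbitrary k (r.right i) with hrR
  have key := Coalgebra.sum_tmul_tmul_eq r rL rR
  apply_fun (TensorProduct.lift act ∘ₗ LinearMap.lTensor H
      (TensorProduct.lift (LinearMap.mul k A) ∘ₗ TensorProduct.map ((act.flip x) ∘ₗ (𝒮))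
        ((act.flip y) ∘ₗ (𝒮)) ∘ₗ (TensorProduct.comm k H H).toLinearMap)) at key
  simp only [map_sum, LinearMap.comp_apply, LinearMap.lTensor_tmul, LinearEquiv.coe_coe,
    TensorProduct.comm_tmul, TensorProduct.map_tmul, TensorProduct.lift.tmul,
    LinearMap.flip_apply, LinearMap.mul_apply'] at key
  calc hSh act h (x * y)
      = ∑ i ∈ r.index, act (r.left i) (act (𝒮 (r.right i)) (x * y)) := by
        rw [hSh, sweedler_repr _ _ r]; simp
    _ = ∑ i ∈ r.index, ∑ m ∈ (rR i).index,
          act (r.left i) (act (𝒮 ((rR i).right m)) x * act (𝒮 ((rR i).left m)) y) := by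
        refine Finset.sum_congr rfl fun i _ => ?_
        rw [act_mul act hpa' _ x y, comul_antipode (k := k) (r.right i), ← (rR i).eq,
          map_sum, map_sum, map_sum, map_sum]
        refine Finset.sum_congr rfl fun m _ => ?_
        simp
    _ = ∑ i ∈ r.index, ∑ j ∈ (rL i).index,
          act ((rL i).left j) (act (𝒮 (r.right i)) x * act (𝒮 ((rL i).right j)) y) := key.symm
    _ = ∑ i ∈ r.index, ∑ j ∈ (rL i).index,
          paRhs k H (LinearMap.mul k A) act ((rL i).left j) (𝒮 ((rL i).right j))
            (act (𝒮 (r.right i)) x) y := by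
        refine Finset.sum_congr rfl fun i _ => Finset.sum_congr rfl fun j _ => ?_
        rw [← hpa'.act_assoc]
        rfl
    _ = ∑ i ∈ r.index, act (r.left i) (act (𝒮 (r.right i)) x) * y := by
        exact Finset.sum_congr rfl fun i _ => claimB act hpa' (r.left i) (rL i) _ y
    _ = hSh act h x * y := by
        rw [hSh, sweedler_repr _ _ r, Finset.sum_mul]
        simp

end Stmt1
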